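/- Let I be a finite nonempty index set, X a real |I|×d matrix, and n ∈ ℝ^I with n(i) ≥ 0 for all i. Then the MLE exists (i.e., there is m̂ ∈ ℝ^I with m̂(i) > 0 for all i, log m̂ in the column space of X, and l(m̂) ≥ l(m) for every m ∈ ℝ^I with m(i) > 0 for all i and log m in the column space of X) if and only if there exists y ∈ ℝ^I such that Xᵀy = 0 and y(i) + n(i) > 0 for all i ∈ I. -/

import Mathlib

private lemma fwd_dir {I : Type*} [Fintype I] [Nonempty I] {d : ℕ}
    (X : Matrix I (Fin d) ℝ) (n : I → ℝ)
    (mhat : I → ℝ) (hpos : ∀ i, 0 < mhat i) (θh : Fin d → ℝ)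
    (hθh : (fun i => Real.log (mhat i)) = X.mulVec θh)
    (hmax : ∀ m : I → ℝ, (∀ i, 0 < m i) →
        (∃ θ : Fin d → ℝ, (fun i => Real.log (m i)) = X.mulVec θ) →
        (∑ i, n i * Real.log (m i) - ∑ i, m i) ≤
          (∑ i, n i * Real.log (mhat i) - ∑ i, mhat i)) :
    ∃ y : I → ℝ, X.transpose.mulVec y = 0 ∧ ∀ i, 0 < y i + n i := by
  classical
  refine ⟨fun i => mhat i - n i, ?_, fun i => by simpa using hpos i⟩
  funext j
  set a : I → ℝ := fun i => Real.log (mhat i) with hadef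
  set b : I → ℝ := fun i => X i j with hbdef
  set g : ℝ → ℝ := fun t => ∑ i, n i * (a i + t * b i) - ∑ i, Real.exp (a i + t * b i)
    with hgdef
  -- g t ≤ g 0 for all t
  have hglemax : ∀ t, g t ≤ g 0 := by
    intro t
    have hmem : ∃ θ : Fin d → ℝ,
        (fun i => Real.log (Real.exp (a i + t * b i))) = X.mulVec θ := by
      refine ⟨fun k => θh k + if k = j then t else 0, ?_⟩
      funext i
      rw [Real.log_exp]
      have h1 : a i = X.mulVec θh i := congrFun hθh i
      simp only [Matrix.mulVec, dotProduct] at h1 ⊢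
      have hsplit : (∑ k, X i k * (θh k + if k = j then t else 0))
          = (∑ k, X i k * θh k) + ∑ k, X i k * (if k = j then t else 0) := by
        rw [← Finset.sum_add_distrib]
        exact Finset.sum_congr rfl fun k _ => by ring
      have hite : (∑ k, X i k * (if k = j then t else 0)) = t * b i := by
        rw [hbdef]
        simp [mul_ite, Finset.sum_ite_eq', mul_comm]
      rw [hsplit, hite, ← h1]
    have := hmax (fun i => Real.exp (a i + t * b i)) (fun i => Real.exp_pos _) hmem
    simp only [Real.log_exp] at this
    have hg0 : g 0 = ∑ i, n i * Real.log (mhat i) - ∑ i, mhat i := by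
      rw [hgdef]
      simp only [zero_mul, add_zero]
      congr 1
      exact Finset.sum_congr rfl fun i _ => by rw [hadef]; simp [Real.exp_log (hpos i)]
    exact this.trans_eq hg0.symm
  -- derivative of g at 0
  have hderiv : HasDerivAt g (∑ i, n i * b i - ∑ i, Real.exp (a i) * b i) 0 := by
    have h1 : HasDerivAt (fun t => ∑ i, n i * (a i + t * b i)) (∑ i, n i * b i) 0 := by
      apply HasDerivAt.fun_sum
      intro i _
      exact ((hasDerivAt_mul_const (b i)).const_add (a i)).const_mul (n i)
    have h2 : HasDerivAt (fun t => ∑ i, Real.exp (a i + t * b i))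
        (∑ i, Real.exp (a i) * b i) 0 := by
      apply HasDerivAt.fun_sum
      intro i _
      have := (((hasDerivAt_mul_const (b i)).const_add (a i)).exp (x := 0))
      simpa using this
    exact h1.sub h2
  have hloc : IsLocalMax g 0 := Filter.Eventually.of_forall hglemax
  have hzero : ∑ i, n i * b i - ∑ i, Real.exp (a i) * b i = 0 := by
    rw [← hderiv.deriv]; exact hloc.deriv_eq_zero
  have hexp : ∀ i, Real.exp (a i) = mhat i := fun i => Real.exp_log (hpos i)
  show ∑ i, X.transpose j i * (mhat i - n i) = 0
  have : ∑ i, X.transpose j i * (mhat i - n i)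
      = ∑ i, Real.exp (a i) * b i - ∑ i, n i * b i := by
    rw [← Finset.sum_sub_distrib]
    refine Finset.sum_congr rfl fun i _ => ?_
    rw [hexp i, Matrix.transpose_apply, hbdef]
    ring
  rw [this]
  linarith

private lemma phi_le (c : ℝ) (hc : 0 < c) (x : ℝ) :
    c * x - Real.exp x ≤ c * Real.log c - c := by
  have h := Real.add_one_le_exp (x - Real.log c)
  have h2 : Real.exp (x - Real.log c) = Real.exp x / c := by
    rw [Real.exp_sub, Real.exp_log hc]
  rw [h2] at h
  have : c * (x - Real.log c + 1) ≤ Real.exp x := by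
    have := mul_le_mul_of_nonneg_left h hc.le
    rw [mul_div_cancel₀ _ hc.ne'] at this
    linarith
  nlinarith

private lemma exp_quad (x : ℝ) (hx : 0 ≤ x) : x ^ 2 / 4 ≤ Real.exp x := by
  have h1 := Real.add_one_le_exp (x / 2)
  have h2 : Real.exp x = Real.exp (x / 2) * Real.exp (x / 2) := by
    rw [← Real.exp_add]; ring_nf
  nlinarith [Real.exp_pos (x / 2)]

private lemma phi_small (c B : ℝ) (hc : 0 < c) :
    ∃ R : ℝ, 0 < R ∧ ∀ x : ℝ, R ≤ |x| → c * x - Real.exp x ≤ B := by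
  refine ⟨max (8 * c) ((1 + |B|) / c), lt_max_of_lt_left (by linarith), fun x hx => ?_⟩
  have hRB : (1 + |B|) / c ≤ |x| := le_trans (le_max_right _ _) hx
  have hcx : 1 + |B| ≤ c * |x| := by
    rw [div_le_iff₀ hc] at hRB; linarith [mul_comm c |x|]
  have hB : -|B| ≤ B := neg_abs_le B
  rcases le_or_gt x 0 with hx0 | hx0
  · have : |x| = -x := abs_of_nonpos hx0
    have hexp := Real.exp_pos x
    nlinarith
  · have habs : |x| = x := abs_of_pos hx0
    have h8 : 8 * c ≤ x := by rw [← habs]; exact le_trans (le_max_left _ _) hx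
    have hq := exp_quad x hx0.le
    nlinarith

private lemma rev_dir {I : Type*} [Fintype I] [Nonempty I] {d : ℕ}
    (X : Matrix I (Fin d) ℝ) (n : I → ℝ)
    (y : I → ℝ) (hy : X.transpose.mulVec y = 0) (hyn : ∀ i, 0 < y i + n i) :
    (∃ mhat : I → ℝ, (∀ i, 0 < mhat i) ∧
      (∃ θ : Fin d → ℝ, (fun i => Real.log (mhat i)) = X.mulVec θ) ∧
      (∀ m : I → ℝ, (∀ i, 0 < m i) →
        (∃ θ : Fin d → ℝ, (fun i => Real.log (m i)) = X.mulVec θ) →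
        (∑ i, n i * Real.log (m i) - ∑ i, m i) ≤
          (∑ i, n i * Real.log (mhat i) - ∑ i, mhat i))) := by
  classical
  set c : I → ℝ := fun i => y i + n i with hcdef
  have hc : ∀ i, 0 < c i := hyn
  -- key orthogonality: y ⬝ Xθ = 0
  have key : ∀ θ : Fin d → ℝ, ∑ i, y i * X.mulVec θ i = 0 := by
    intro θ
    have : dotProduct y (X.mulVec θ) = dotProduct (Matrix.vecMul y X) θ :=
      Matrix.dotProduct_mulVec y X θ
    rw [← Matrix.mulVec_transpose, hy] at this
    simpa [dotProduct] using this
  set V : Submodule ℝ (I → ℝ) := LinearMap.range X.mulVecLin with hVdef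
  set F : V → ℝ := fun μ => ∑ i, c i * (μ : I → ℝ) i - ∑ i, Real.exp ((μ : I → ℝ) i)
    with hFdef
  have hFcont : Continuous F := by
    apply Continuous.sub
    · exact continuous_finset_sum _ fun i _ =>
        continuous_const.mul ((continuous_apply i).comp continuous_subtype_val)
    · exact continuous_finset_sum _ fun i _ =>
        Real.continuous_exp.comp ((continuous_apply i).comp continuous_subtype_val)
  have hbot : Filter.Tendsto F (Filter.cocompact V) Filter.atBot := by
    rw [Filter.tendsto_atBot]
    intro B
    set K : I → ℝ := fun i => c i * Real.log (c i) - c i with hKdef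
    have hRex : ∀ i : I, ∃ R : ℝ, 0 < R ∧ ∀ x : ℝ, R ≤ |x| →
        c i * x - Real.exp x ≤ B - ∑ k, K k + K i :=
      fun i => phi_small (c i) _ (hc i)
    choose R hRpos hR using hRex
    have hne : (Finset.univ : Finset I).Nonempty := Finset.univ_nonempty
    set R0 : ℝ := Finset.univ.sup' hne R with hR0def
    have hR0pos : 0 < R0 := by
      obtain ⟨i, _, hi⟩ := Finset.exists_mem_eq_sup' hne R
      rw [hR0def, hi]; exact hRpos i
    filter_upwards [tendsto_norm_cocompact_atTop.eventually_ge_atTop R0] with μ hμ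
    -- find coordinate attaining a large value
    have hj : ∃ j : I, R0 ≤ |(μ : I → ℝ) j| := by
      by_contra h
      push_neg at h
      have hlt : ‖(μ : I → ℝ)‖ < R0 := by
        rw [pi_norm_lt_iff hR0pos]
        intro i; simpa [Real.norm_eq_abs] using h i
      have : ‖(μ : I → ℝ)‖ = ‖μ‖ := rfl
      linarith [this ▸ hlt, hμ]
    obtain ⟨j, hj⟩ := hj
    have hRj : R j ≤ |(μ : I → ℝ) j| := le_trans (Finset.le_sup' R (Finset.mem_univ j)) hj
    have hterm := hR j _ hRj
    have hsum : F μ = ∑ i, (c i * (μ : I → ℝ) i - Real.exp ((μ : I → ℝ) i)) := by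
      rw [hFdef]; simp [Finset.sum_sub_distrib]
    rw [hsum, ← Finset.add_sum_erase _ _ (Finset.mem_univ j)]
    have hrest : ∑ i ∈ Finset.univ.erase j, (c i * (μ : I → ℝ) i - Real.exp ((μ : I → ℝ) i))
        ≤ ∑ i ∈ Finset.univ.erase j, K i :=
      Finset.sum_le_sum fun i _ => phi_le (c i) (hc i) _
    have herase : ∑ i ∈ Finset.univ.erase j, K i = ∑ i, K i - K j := by
      rw [← Finset.add_sum_erase _ K (Finset.mem_univ j)]; ring
    linarith [hrest, herase ▸ hrest]
  obtain ⟨μhat, hμhatmax⟩ := hFcont.exists_forall_ge hbot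
  obtain ⟨θhat, hθhat⟩ := μhat.2
  rw [Matrix.mulVecLin_apply] at hθhat
  -- the sum identity: for μ ∈ V represented by θ, l(exp μ) = F μ
  have lF : ∀ (θ : Fin d → ℝ) (μ : V), X.mulVec θ = (μ : I → ℝ) →
      ∑ i, n i * (μ : I → ℝ) i - ∑ i, Real.exp ((μ : I → ℝ) i) = F μ := by
    intro θ μ hμ
    have h0 := key θ
    rw [hμ] at h0
    have : ∑ i, c i * (μ : I → ℝ) i = ∑ i, n i * (μ : I → ℝ) i := by
      rw [hcdef]
      rw [show ∑ i, (fun i => y i + n i) i * (μ : I → ℝ) i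
          = ∑ i, y i * (μ : I → ℝ) i + ∑ i, n i * (μ : I → ℝ) i by
        rw [← Finset.sum_add_distrib]; exact Finset.sum_congr rfl fun i _ => by ring]
      rw [h0]; ring
    rw [hFdef]; simp only; rw [this]
  refine ⟨fun i => Real.exp ((μhat : I → ℝ) i), fun i => Real.exp_pos _,
    ⟨θhat, by funext i; rw [Real.log_exp, hθhat]⟩, ?_⟩
  rintro m hm ⟨θ, hθ⟩
  have hmem : X.mulVec θ ∈ V := ⟨θ, Matrix.mulVecLin_apply X θ⟩
  set μ : V := ⟨X.mulVec θ, hmem⟩ with hμdef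
  have hmμ : ∀ i, m i = Real.exp ((μ : I → ℝ) i) := by
    intro i
    have h1 : Real.log (m i) = X.mulVec θ i := congrFun hθ i
    show m i = Real.exp (X.mulVec θ i)
    rw [← h1, Real.exp_log (hm i)]
  have hlogm : ∀ i, Real.log (m i) = (μ : I → ℝ) i := fun i => congrFun hθ i
  calc ∑ i, n i * Real.log (m i) - ∑ i, m i
      = ∑ i, n i * (μ : I → ℝ) i - ∑ i, Real.exp ((μ : I → ℝ) i) := by
        congr 1
        · exact Finset.sum_congr rfl fun i _ => by rw [hlogm i]
        · exact Finset.sum_congr rfl fun i _ => hmμ i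
    _ = F μ := lF θ μ rfl
    _ ≤ F μhat := hμhatmax μ
    _ = ∑ i, n i * (μhat : I → ℝ) i - ∑ i, Real.exp ((μhat : I → ℝ) i) :=
        (lF θhat μhat hθhat).symm
    _ = ∑ i, n i * Real.log (Real.exp ((μhat : I → ℝ) i)) - ∑ i, Real.exp ((μhat : I → ℝ) i) := by
        simp [Real.log_exp]

/-- The MLE exists iff there exists `y` with `Xᵀy = 0` and `y + n > 0`
(Haberman's condition, Theorem 2.2). -/
theorem mle_exists_iff {I : Type*} [Fintype I] [Nonempty I] {d : ℕ}
    (X : Matrix I (Fin d) ℝ) (n : I → ℝ) (hn : ∀ i, 0 ≤ n i) :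
    (∃ mhat : I → ℝ, (∀ i, 0 < mhat i) ∧
      (∃ θ : Fin d → ℝ, (fun i => Real.log (mhat i)) = X.mulVec θ) ∧
      (∀ m : I → ℝ, (∀ i, 0 < m i) →
        (∃ θ : Fin d → ℝ, (fun i => Real.log (m i)) = X.mulVec θ) →
        (∑ i, n i * Real.log (m i) - ∑ i, m i) ≤
          (∑ i, n i * Real.log (mhat i) - ∑ i, mhat i)))
    ↔ (∃ y : I → ℝ, X.transpose.mulVec y = 0 ∧ ∀ i, 0 < y i + n i) := by
  constructor
  · rintro ⟨mhat, hpos, ⟨θh, hθh⟩, hmax⟩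
    exact fwd_dir X n mhat hpos θh hθh hmax
  · rintro ⟨y, hy, hyn⟩
    exact rev_dir X n y hy hyn
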